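/- In the setting of the CD effective-server-time recursions (K ≥ 2, ρ > 0, μ_t > 0, λ̃ = ρ·μ_i, with n_i, α_i, γ_i defined as in the first-moment recursion), for每 each 1 ≤ i ≤ K−1 the coefficient n_{K−i} satisfies: μ_i·(1 − n_{K−i}(μ_i)) → μ_t·ω_{K−i} as μ_i → ∞ (with ρ fixed), where ω_{K−i} = (1/K)·Σ_{j=0}^{i−1} (i−j)·ρ^j / ((K−i+j)·(K−i+j−1)···(K−i)). Moreover ω_1·ρ + 1 = η, where η = Σ_{j=0}^{K−1} (ρ^j/j!)·(K−j)/K. -/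

import Mathlib

open Filter

/-- `α_i = λ̃ + i·μᵢ + (K−i)·μ_t/K` with `λ̃ = ρ·μᵢ`. -/
noncomputable def alphaCD (K : ℕ) (ρ μt μi : ℝ) (i : ℕ) : ℝ :=
  ρ * μi + (i : ℝ) * μi + ((K : ℝ) - (i : ℝ)) * μt / K

/-- `γ_i = i·μᵢ + (K−i)·μ_t/K`. -/
noncomputable def gammaCD (K : ℕ) (μt μi : ℝ) (i : ℕ) : ℝ :=
  (i : ℝ) * μi + ((K : ℝ) - (i : ℝ)) * μt / K

noncomputable def Shat (K : ℕ) (ρ : ℝ) (i : ℕ) : ℝ :=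
  ∑ j ∈ Finset.range i, ((i : ℝ) - j) * ρ ^ j / ∏ t ∈ Finset.range (j + 1), ((K : ℝ) - i + t)

lemma prod_shift (c : ℝ) (j : ℕ) :
    ∏ t ∈ Finset.range (j + 2), (c + t) = c * ∏ t ∈ Finset.range (j + 1), (c + 1 + t) := by
  rw [Finset.prod_range_succ']
  simp only [Nat.cast_zero, add_zero]
  rw [mul_comm]
  congr 1
  exact Finset.prod_congr rfl fun t _ => by push_cast; ring

lemma prodKit_pos (K i j : ℕ) (hiK : i < K) :
    0 < ∏ t ∈ Finset.range (j + 1), ((K : ℝ) - i + t) := by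
  apply Finset.prod_pos
  intro t _
  have h1 : (i : ℝ) + 1 ≤ K := by exact_mod_cast hiK
  have h2 : (0:ℝ) ≤ t := Nat.cast_nonneg t
  linarith

lemma Shat_pos (K : ℕ) (ρ : ℝ) (hρ : 0 < ρ) (i : ℕ) (hi : 1 ≤ i) (hiK : i < K) :
    0 < Shat K ρ i := by
  apply Finset.sum_pos
  · intro j hj
    have hj' : j < i := Finset.mem_range.mp hj
    have h1 : (j:ℝ) + 1 ≤ i := by exact_mod_cast hj'
    apply div_pos
    · exact mul_pos (by linarith) (pow_pos hρ j)
    · exact prodKit_pos K i j hiK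
  · exact ⟨0, Finset.mem_range.mpr hi⟩

lemma Shat_rec (K : ℕ) (ρ : ℝ) (i : ℕ) (hiK : i + 1 < K) :
    ((K : ℝ) - ((i:ℝ) + 1)) * Shat K ρ (i + 1) = ((i : ℝ) + 1) + ρ * Shat K ρ i := by
  have hKi : (0:ℝ) < (K:ℝ) - ((i:ℝ)+1) := by
    have : (i:ℝ) + 1 + 1 ≤ K := by exact_mod_cast hiK
    linarith
  have hKine : ((K:ℝ) - ((i:ℝ)+1)) ≠ 0 := ne_of_gt hKi
  unfold Shat
  rw [Finset.sum_range_succ', mul_add, add_comm ((i:ℝ)+1)]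
  congr 1
  · rw [Finset.mul_sum, Finset.mul_sum]
    refine Finset.sum_congr rfl fun j hj => ?_
    have hP := (prodKit_pos K i j (by omega)).ne'
    have hps : ∏ t ∈ Finset.range (j + 1 + 1), ((K:ℝ) - ((i:ℕ)+1:ℕ) + t)
        = ((K:ℝ) - ((i:ℝ)+1)) * ∏ t ∈ Finset.range (j + 1), ((K:ℝ) - (i:ℝ) + t) := by
      have := prod_shift ((K:ℝ) - ((i:ℝ)+1)) j
      push_cast at this ⊢
      rw [this]
      congr 1
      exact Finset.prod_congr rfl fun t _ => by ring
    rw [hps]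
    push_cast
    field_simp
    ring
  · norm_num
    field_simp

theorem cd_aux_part1
    (K : ℕ) (hK : 2 ≤ K) (ρ μt : ℝ) (hρ : 0 < ρ) (hmut : 0 < μt)
    (n : ℝ → ℕ → ℝ)
    (hnK1 : ∀ μi : ℝ, 0 < μi →
      n μi (K - 1) = ((K : ℝ) - 1) * μi / gammaCD K μt μi (K - 1))
    (hrec : ∀ μi : ℝ, 0 < μi → ∀ i, 2 ≤ i → i ≤ K - 1 →
      n μi (K - i) = ((K : ℝ) - (i : ℝ)) * μi
          / (alphaCD K ρ μt μi (K - i) - n μi (K - i + 1) * (ρ * μi))) :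
    ∀ i, 1 ≤ i → i ≤ K - 1 →
      Tendsto (fun μi => μi * (1 - n μi (K - i))) atTop
        (nhds (μt * ((1 / (K : ℝ)) * Shat K ρ i))) := by
  have hK0 : (0:ℝ) < (K:ℝ) := by positivity
  have hK1 : (0:ℝ) < (K:ℝ) - 1 := by
    have : (2:ℝ) ≤ K := by exact_mod_cast hK
    linarith
  intro i hi1
  induction i, hi1 using Nat.le_induction with
  | base =>
    intro _
    -- base case i = 1
    have hval : μt * ((1 / (K : ℝ)) * Shat K ρ 1) = (μt / K) / ((K:ℝ) - 1) := by
      unfold Shat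
      simp
      field_simp
    rw [hval]
    have hden : Tendsto (fun μi : ℝ => ((K:ℝ) - 1) + (μt / K) * μi⁻¹) atTop
        (nhds (((K:ℝ) - 1) + (μt / K) * 0)) :=
      tendsto_const_nhds.add (tendsto_const_nhds.mul tendsto_inv_atTop_zero)
    rw [mul_zero, add_zero] at hden
    have hg : Tendsto (fun μi : ℝ => (μt / K) / (((K:ℝ) - 1) + (μt / K) * μi⁻¹)) atTop
        (nhds ((μt / K) / ((K:ℝ) - 1))) :=
      Tendsto.div tendsto_const_nhds hden (ne_of_gt hK1)
    refine hg.congr' ?_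
    filter_upwards [eventually_gt_atTop (0:ℝ)] with μi hμ
    rw [hnK1 μi hμ]
    unfold gammaCD
    have hc : ((K - 1 : ℕ) : ℝ) = (K:ℝ) - 1 := by
      have := Nat.cast_sub (show 1 ≤ K by omega) (R := ℝ)
      push_cast at this ⊢
      linarith
    rw [hc]
    have hγ : 0 < ((K:ℝ) - 1) * μi + ((K:ℝ) - ((K:ℝ) - 1)) * μt / K := by
      have h1 : ((K:ℝ) - ((K:ℝ) - 1)) = 1 := by ring
      rw [h1]
      have := mul_pos hK1 hμ
      positivity
    have hd2 : 0 < ((K:ℝ) - 1) + (μt / K) * μi⁻¹ := by positivity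
    rw [show (K:ℝ) - ((K:ℝ) - 1) = 1 by ring] at hγ ⊢
    field_simp
    ring
  | succ i hi ih =>
    intro hiK
    have ihT := ih (by omega)
    set e' : ℝ → ℝ := fun μi => μi * (1 - n μi (K - i)) with he'
    set L' : ℝ := μt * ((1 / (K : ℝ)) * Shat K ρ i) with hL'def
    have hL' : 0 < L' := by
      have := Shat_pos K ρ hρ i hi (by omega)
      positivity
    have hki : (0:ℝ) < (K:ℝ) - ((i:ℝ) + 1) := by
      have : (i:ℝ) + 1 + 1 ≤ K := by exact_mod_cast (show i + 2 ≤ K by omega)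
      linarith
    have hkine := ne_of_gt hki
    -- limit value
    have hV : μt * ((1 / (K : ℝ)) * Shat K ρ (i + 1))
        = (ρ * L' + ((i:ℝ) + 1) * μt / K) / ((K:ℝ) - ((i:ℝ) + 1)) := by
      have hr := Shat_rec K ρ i (by omega)
      rw [eq_div_iff hkine, hL'def]
      linear_combination (μt / (K:ℝ)) * hr
    rw [hV]
    have hnum : Tendsto (fun μi => ρ * e' μi + ((i:ℝ) + 1) * μt / K) atTop
        (nhds (ρ * L' + ((i:ℝ) + 1) * μt / K)) :=
      (ihT.const_mul ρ).add tendsto_const_nhds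
    have hden : Tendsto (fun μi => ρ * e' μi * μi⁻¹ + ((K:ℝ) - ((i:ℝ) + 1))
          + ((i:ℝ) + 1) * μt / K * μi⁻¹) atTop
        (nhds (ρ * L' * 0 + ((K:ℝ) - ((i:ℝ) + 1)) + ((i:ℝ) + 1) * μt / K * 0)) :=
      (((ihT.const_mul ρ).mul tendsto_inv_atTop_zero).add tendsto_const_nhds).add
        (tendsto_const_nhds.mul tendsto_inv_atTop_zero)
    simp only [mul_zero, zero_add, add_zero] at hden
    have hg := hnum.div hden hkine
    refine hg.congr' ?_
    have hev : ∀ᶠ μi in atTop, 0 < e' μi := ihT.eventually (eventually_gt_nhds hL')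
    filter_upwards [eventually_gt_atTop (0:ℝ), hev] with μi hμ he
    rw [hrec μi hμ (i + 1) (by omega) (by omega)]
    have hidx : K - (i + 1) + 1 = K - i := by omega
    rw [hidx]
    unfold alphaCD
    have hc : ((K - (i + 1) : ℕ) : ℝ) = (K:ℝ) - ((i:ℝ) + 1) := by
      have := Nat.cast_sub (show i + 1 ≤ K by omega) (R := ℝ)
      push_cast at this ⊢
      linarith
    rw [hc]
    set x := n μi (K - i) with hx
    have hex : e' μi = μi * (1 - x) := rfl
    have he2 : 0 < μi * (1 - x) := by rw [← hex]; exact he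
    simp only [Pi.div_apply]
    rw [hex]
    push_cast
    have hE : ((K:ℝ) - ((K:ℝ) - ((i:ℝ) + 1))) = (i:ℝ) + 1 := by ring
    rw [hE]
    have h1 : 0 < ρ * (μi * (1 - x)) := mul_pos hρ he2
    have h2 : 0 < ((K:ℝ) - ((i:ℝ)+1)) * μi := mul_pos hki hμ
    have h3 : 0 < ((i:ℝ)+1) * μt / (K:ℝ) := by positivity
    set A : ℝ := ρ * (μi * (1 - x)) + ((i:ℝ) + 1) * μt / (K:ℝ) with hAdef
    set G : ℝ := ρ * (μi * (1 - x)) * μi⁻¹ + ((K:ℝ) - ((i:ℝ) + 1))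
        + ((i:ℝ) + 1) * μt / (K:ℝ) * μi⁻¹ with hGdef
    set D : ℝ := ρ * μi + ((K:ℝ) - ((i:ℝ) + 1)) * μi + ((i:ℝ) + 1) * μt / (K:ℝ)
        - x * (ρ * μi) with hDdef
    set N : ℝ := ((K:ℝ) - ((i:ℝ) + 1)) * μi with hNdef
    have hDpos : 0 < D := by rw [hDdef]; nlinarith
    have hGpos : 0 < G := by
      rw [hGdef]
      have h4 : 0 < ρ * (μi * (1 - x)) * μi⁻¹ := mul_pos h1 (inv_pos.mpr hμ)
      have h5 : 0 < ((i:ℝ)+1) * μt / (K:ℝ) * μi⁻¹ := by positivity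
      linarith
    have hGD : G * μi = D := by
      rw [hGdef, hDdef]
      field_simp
      ring
    have hAD : A = D - N := by rw [hAdef, hDdef, hNdef]; ring
    have step : (1 : ℝ) - N / D = A / D := by
      rw [hAD, sub_div, div_self hDpos.ne']
    calc A / G = A * μi / (G * μi) := by
            rw [mul_div_mul_right _ _ hμ.ne']
      _ = A * μi / D := by rw [hGD]
      _ = μi * (A / D) := by rw [mul_comm A μi, mul_div_assoc]
      _ = μi * (1 - N / D) := by rw [step]

lemma prod_one_add (n : ℕ) : ∏ t ∈ Finset.range n, (1 + (t:ℝ)) = (n.factorial : ℝ) := by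
  induction n with
  | zero => simp
  | succ n ih => rw [Finset.prod_range_succ, ih, Nat.factorial_succ]; push_cast; ring

lemma cd_aux_part2 (K : ℕ) (hK : 2 ≤ K) (ρ : ℝ) :
    ((1 / (K : ℝ))
          * ∑ j ∈ Finset.range (K - 1),
              (((K : ℝ) - 1) - j) * ρ ^ j / ∏ t ∈ Finset.range (j + 1), (1 + (t : ℝ))) * ρ + 1
        = ∑ j ∈ Finset.range K, (ρ ^ j / (Nat.factorial j : ℝ)) * (((K : ℝ) - j) / K) := by
  have hK0 : (K:ℝ) ≠ 0 := by positivity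
  obtain ⟨m, rfl⟩ : ∃ m, K = m + 1 := ⟨K - 1, by omega⟩
  rw [Finset.sum_range_succ']
  have h0 : (ρ ^ 0 / (Nat.factorial 0 : ℝ)) * (((m+1 : ℕ) : ℝ) - (0:ℕ)) / ((m+1:ℕ):ℝ) = 1 := by
    simp
    field_simp
    exact Nat.cast_add_one_ne_zero m
  simp only [Nat.add_sub_cancel]
  congr 1
  · rw [Finset.mul_sum, Finset.sum_mul]
    refine Finset.sum_congr rfl fun j hj => ?_
    rw [prod_one_add]
    have hf : ((j+1).factorial : ℝ) ≠ 0 := by positivity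
    push_cast
    field_simp
    ring
  · simp
    field_simp

/-- Asymptotics of the coefficients `n_{K−i}`:
`μᵢ·(1 − n_{K−i}(μᵢ)) → μ_t·ω_{K−i}` as `μᵢ → ∞`, and `ω₁·ρ + 1 = η`. -/
theorem cd_coefficient_n_limit
    (K : ℕ) (hK : 2 ≤ K) (ρ μt : ℝ) (hρ : 0 < ρ) (hmut : 0 < μt)
    (n : ℝ → ℕ → ℝ)
    (hnK1 : ∀ μi : ℝ, 0 < μi →
      n μi (K - 1) = ((K : ℝ) - 1) * μi / gammaCD K μt μi (K - 1))
    (hrec : ∀ μi : ℝ, 0 < μi → ∀ i, 2 ≤ i → i ≤ K - 1 →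
      n μi (K - i) = ((K : ℝ) - (i : ℝ)) * μi
          / (alphaCD K ρ μt μi (K - i) - n μi (K - i + 1) * (ρ * μi))) :
    (∀ i, 1 ≤ i → i ≤ K - 1 →
      Tendsto (fun μi => μi * (1 - n μi (K - i))) atTop
        (nhds (μt * ((1 / (K : ℝ))
          * ∑ j ∈ Finset.range i,
              ((i : ℝ) - j) * ρ ^ j / ∏ t ∈ Finset.range (j + 1), ((K : ℝ) - i + t)))))
    ∧ ((1 / (K : ℝ))
          * ∑ j ∈ Finset.range (K - 1),
              (((K : ℝ) - 1) - j) * ρ ^ j / ∏ t ∈ Finset.range (j + 1), (1 + (t : ℝ))) * ρ + 1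
        = ∑ j ∈ Finset.range K, (ρ ^ j / (Nat.factorial j : ℝ)) * (((K : ℝ) - j) / K) := by
  exact ⟨fun i h1 h2 => cd_aux_part1 K hK ρ μt hρ hmut n hnK1 hrec i h1 h2,
    cd_aux_part2 K hK ρ⟩
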